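/- Let G be a finite simple graph on a vertex type V and H a finite simple graph on a vertex type W, and let G ∨ H denote their join: the simple graph on the sum type V ⊕ W in which two vertices are adjacent if and only if they are both in V and adjacent in G, or both in W and adjacent in H, or one lies in V and the other in W. Then σ(G ∨ H, x) = σ(G, x) · σ(H, x). -/

import Mathlib

open Polynomial

/-- `numIndepPartitions G i` is the number of partitions of the vertex set of `G` into
exactly `i` nonempty independent sets, encoded as the number of setoids (equivalence
relations) on `V` with exactly `i` equivalence classes, each class being an independent
set of `G`. -/
noncomputable def numIndepPartitions {V : Type*} (G : SimpleGraph V) (i : ℕ) : ℕ :=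
  Nat.card {P : Setoid V // Nat.card (Quotient P) = i ∧
    ∀ c ∈ P.classes, c.Pairwise fun u v => ¬ G.Adj u v}

/-- The σ-polynomial of a finite simple graph `G`: `σ(G,x) = ∑ aᵢ xⁱ` where `aᵢ` is the
number of partitions of the vertex set of `G` into `i` nonempty independent sets. -/
noncomputable def sigmaPoly {V : Type*} [Finite V] (G : SimpleGraph V) : Polynomial ℝ :=
  ∑ i ∈ Finset.range (Nat.card V + 1), (numIndepPartitions G i : ℝ) • X ^ i


/-- The join of two simple graphs: vertices from both sides, keeping all edges and
adding all edges between the two sides. -/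
def graphJoin {V W : Type*} (G : SimpleGraph V) (H : SimpleGraph W) : SimpleGraph (V ⊕ W) where
  Adj a b :=
    match a, b with
    | Sum.inl u, Sum.inl v => G.Adj u v
    | Sum.inr u, Sum.inr v => H.Adj u v
    | Sum.inl _, Sum.inr _ => True
    | Sum.inr _, Sum.inl _ => True
  symm := ⟨by rintro (u | u) (v | v) h <;> simp_all [SimpleGraph.adj_comm]⟩
  loopless := ⟨by rintro (u | u) h <;> simp_all⟩

/-! ### Auxiliary lemmas -/

instance setoidFinite {V : Type*} [Finite V] : Finite (Setoid V) :=
  Finite.of_injective (fun P => P.r)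
    (fun _ _ h => Setoid.ext fun x y => iff_of_eq (congrFun (congrFun h x) y))

lemma classes_indep_iff {V : Type*} (G : SimpleGraph V) (P : Setoid V) :
    (∀ c ∈ P.classes, c.Pairwise fun u v => ¬ G.Adj u v) ↔
      ∀ u v, P.r u v → ¬ G.Adj u v := by
  constructor
  · intro h u v huv hadj
    rcases (P.rel_iff_exists_classes.mp huv) with ⟨c, hc, hu, hv⟩
    exact h c hc hu hv (G.ne_of_adj hadj) hadj
  · rintro h c ⟨y, rfl⟩ u hu v hv hne
    exact h u v (P.trans' hu (P.symm' hv))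

/-- `numIndepPartitions` counts edge-avoiding setoids with `i` classes. -/
lemma numIndepPartitions_eq {V : Type*} (G : SimpleGraph V) (i : ℕ) :
    numIndepPartitions G i =
      Nat.card {P : {P : Setoid V // ∀ u v, P.r u v → ¬ G.Adj u v} //
        Nat.card (Quotient P.1) = i} := by
  refine Nat.card_congr ?_
  refine (Equiv.subtypeEquivRight fun P => ?_).trans
    (Equiv.subtypeSubtypeEquivSubtypeInter
      (fun P : Setoid V => ∀ u v, P.r u v → ¬ G.Adj u v)
      (fun P => Nat.card (Quotient P) = i)).symm
  rw [and_comm, classes_indep_iff]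

def sumSetoid {V W : Type*} (P : Setoid V) (Q : Setoid W) : Setoid (V ⊕ W) where
  r := Sum.LiftRel P.r Q.r
  iseqv := by
    constructor
    · rintro (u | u) <;> constructor <;> exact Setoid.refl u
    · rintro _ _ (h | h) <;> constructor <;> exact Setoid.symm h
    · rintro _ _ _ (h | h) h2 <;> cases h2 <;> constructor
      · exact Setoid.trans h ‹_›
      · exact Setoid.trans h ‹_›

def joinSetoidEquiv {V W : Type*} (G : SimpleGraph V) (H : SimpleGraph W) :
    {P : Setoid (V ⊕ W) // ∀ a b, P.r a b → ¬ (graphJoin G H).Adj a b} ≃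
      {P : Setoid V // ∀ a b, P.r a b → ¬ G.Adj a b} ×
      {Q : Setoid W // ∀ a b, Q.r a b → ¬ H.Adj a b} where
  toFun P := ⟨⟨Setoid.comap Sum.inl P.1, fun a b h => P.2 _ _ h⟩,
              ⟨Setoid.comap Sum.inr P.1, fun a b h => P.2 _ _ h⟩⟩
  invFun PQ := ⟨sumSetoid PQ.1.1 PQ.2.1, by
    rintro _ _ (h | h)
    · exact PQ.1.2 _ _ h
    · exact PQ.2.2 _ _ h⟩
  left_inv := by
    rintro ⟨P, hP⟩
    ext a b
    show Sum.LiftRel _ _ a b ↔ P.r a b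
    constructor
    · rintro (h | h) <;> exact h
    · intro h
      match a, b with
      | Sum.inl u, Sum.inl v => exact Sum.LiftRel.inl h
      | Sum.inr u, Sum.inr v => exact Sum.LiftRel.inr h
      | Sum.inl u, Sum.inr v => exact absurd trivial (hP _ _ h)
      | Sum.inr u, Sum.inl v => exact absurd trivial (hP _ _ h)
  right_inv := by
    rintro ⟨⟨P, hP⟩, ⟨Q, hQ⟩⟩
    refine Prod.ext (Subtype.ext ?_) (Subtype.ext ?_) <;>
      · ext a b
        constructor
        · rintro (h | h); exact h
        · intro h; constructor; exact h

def sumQuotEquiv {V W : Type*} (P : Setoid V) (Q : Setoid W) :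
    Quotient (sumSetoid P Q) ≃ Quotient P ⊕ Quotient Q where
  toFun := Quotient.lift (Sum.map (Quotient.mk P) (Quotient.mk Q)) (by
    rintro _ _ (h | h) <;> simp [Quotient.sound h])
  invFun := Sum.elim
    (Quotient.lift (fun v => Quotient.mk (sumSetoid P Q) (Sum.inl v))
      (fun a b h => Quotient.sound (Sum.LiftRel.inl h)))
    (Quotient.lift (fun w => Quotient.mk (sumSetoid P Q) (Sum.inr w))
      (fun a b h => Quotient.sound (Sum.LiftRel.inr h)))
  left_inv := by rintro ⟨u | u⟩ <;> rfl
  right_inv := by rintro (q | q) <;> induction q using Quotient.ind <;> rfl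

def pairSumEquiv {A B : Type*} (f : A → ℕ) (g : B → ℕ) (k : ℕ) :
    {x : A × B // f x.1 + g x.2 = k} ≃
      Σ ij : Finset.HasAntidiagonal.antidiagonal k,
        {a : A // f a = (ij : ℕ × ℕ).1} × {b : B // g b = (ij : ℕ × ℕ).2} where
  toFun x := ⟨⟨(f x.1.1, g x.1.2), Finset.HasAntidiagonal.mem_antidiagonal.2 x.2⟩, ⟨x.1.1, rfl⟩, ⟨x.1.2, rfl⟩⟩
  invFun y := ⟨(y.2.1.1, y.2.2.1), by
    rw [y.2.1.2, y.2.2.2]; exact Finset.HasAntidiagonal.mem_antidiagonal.1 y.1.2⟩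
  left_inv x := rfl
  right_inv := by
    rintro ⟨⟨⟨i, j⟩, hij⟩, ⟨a, ha⟩, ⟨b, hb⟩⟩
    dsimp at ha hb; subst ha; subst hb; rfl

lemma card_pair_sum {A B : Type*} [Finite A] [Finite B] (f : A → ℕ) (g : B → ℕ) (k : ℕ) :
    Nat.card {x : A × B // f x.1 + g x.2 = k} =
      ∑ ij ∈ Finset.HasAntidiagonal.antidiagonal k,
        Nat.card {a : A // f a = ij.1} * Nat.card {b : B // g b = ij.2} := by
  classical
  haveI := Fintype.ofFinite A
  haveI := Fintype.ofFinite B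
  rw [Nat.card_congr (pairSumEquiv f g k)]
  simp only [Nat.card_eq_fintype_card, Fintype.card_sigma, Fintype.card_prod]
  rw [← Finset.sum_coe_sort (Finset.HasAntidiagonal.antidiagonal k)]

/-- The key counting identity. -/
lemma numIndepPartitions_join {V W : Type*} [Finite V] [Finite W]
    (G : SimpleGraph V) (H : SimpleGraph W) (k : ℕ) :
    numIndepPartitions (graphJoin G H) k =
      ∑ ij ∈ Finset.HasAntidiagonal.antidiagonal k,
        numIndepPartitions G ij.1 * numIndepPartitions H ij.2 := by
  rw [numIndepPartitions_eq]
  have e : {x : {P : Setoid V // ∀ a b, P.r a b → ¬ G.Adj a b} ×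
              {Q : Setoid W // ∀ a b, Q.r a b → ¬ H.Adj a b} //
              Nat.card (Quotient x.1.1) + Nat.card (Quotient x.2.1) = k} ≃
      {P : {P : Setoid (V ⊕ W) // ∀ a b, P.r a b → ¬ (graphJoin G H).Adj a b} //
        Nat.card (Quotient P.1) = k} := by
    refine (joinSetoidEquiv G H).symm.subtypeEquiv fun x => ?_
    have : Nat.card (Quotient (sumSetoid x.1.1 x.2.1)) =
        Nat.card (Quotient x.1.1) + Nat.card (Quotient x.2.1) := by
      rw [Nat.card_congr (sumQuotEquiv x.1.1 x.2.1), Nat.card_sum]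
    show _ ↔ Nat.card (Quotient (sumSetoid x.1.1 x.2.1)) = k
    rw [this]
  rw [← Nat.card_congr e]
  refine (card_pair_sum (A := {P : Setoid V // ∀ a b, P.r a b → ¬ G.Adj a b})
    (B := {Q : Setoid W // ∀ a b, Q.r a b → ¬ H.Adj a b})
    (fun P => Nat.card (Quotient P.1)) (fun Q => Nat.card (Quotient Q.1)) k).trans ?_
  exact Finset.sum_congr rfl fun ij _ => by rw [numIndepPartitions_eq, numIndepPartitions_eq]

lemma numIndepPartitions_eq_zero {V : Type*} [Finite V] (G : SimpleGraph V) {i : ℕ}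
    (h : Nat.card V < i) : numIndepPartitions G i = 0 := by
  have : IsEmpty {P : Setoid V // Nat.card (Quotient P) = i ∧
      ∀ c ∈ P.classes, c.Pairwise fun u v => ¬ G.Adj u v} := by
    refine ⟨fun P => ?_⟩
    obtain ⟨P, hPi, -⟩ := P
    have hle : Nat.card (Quotient P) ≤ Nat.card V :=
      Nat.card_le_card_of_surjective _ Quotient.mk_surjective
    omega
  rw [numIndepPartitions]
  exact Nat.card_of_isEmpty

lemma coeff_sigmaPoly {V : Type*} [Finite V] (G : SimpleGraph V) (m : ℕ) :
    (sigmaPoly G).coeff m = numIndepPartitions G m := by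
  rw [sigmaPoly, finset_sum_coeff]
  simp only [coeff_smul, coeff_X_pow, smul_eq_mul, mul_ite, mul_one, mul_zero]
  by_cases h : m < Nat.card V + 1
  · rw [Finset.sum_ite_eq (Finset.range (Nat.card V + 1)) m fun i => (numIndepPartitions G i : ℝ)]
    simp [Finset.mem_range.2 h]
  · rw [Finset.sum_eq_zero, numIndepPartitions_eq_zero G (by omega), Nat.cast_zero]
    intro i hi
    rw [if_neg]
    exact fun hmi => h (hmi ▸ Finset.mem_range.1 hi)

theorem sigmaPoly_join {V W : Type*} [Finite V] [Finite W]
    (G : SimpleGraph V) (H : SimpleGraph W) :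
    sigmaPoly (graphJoin G H) = sigmaPoly G * sigmaPoly H := by
  ext m
  rw [coeff_mul, coeff_sigmaPoly, numIndepPartitions_join]
  push_cast
  exact Finset.sum_congr rfl fun ij _ => by rw [coeff_sigmaPoly, coeff_sigmaPoly]
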